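/- Let s > 1/2, 0 < ε < 1/2, and let k, ℓ be positive integers and J ≥ 1 a real number. Then ∑_{i,j > J, jk = iℓ} 1/(ij) ≤ C · J^{−ε} · (gcd(k,ℓ)²/(kℓ))^{1−ε/2} for an absolute constant C; more precisely ∑_{i,j>J, jk=iℓ} 1/(ij) ≤ C·min(gcd(k,ℓ)/(max(k,ℓ)·J), gcd(k,ℓ)²/(kℓ)). -/

import Mathlib

open Filter Topology

lemma telesc (m : ℕ) (hm : 0 < m) :
    HasSum (fun n : ℕ => 1/((n:ℝ)+m) - 1/((n:ℝ)+m+1)) (1/m) := by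
  have hm' : (0:ℝ) < m := by exact_mod_cast hm
  have hnn : ∀ n : ℕ, 0 ≤ 1/((n:ℝ)+m) - 1/((n:ℝ)+m+1) := by
    intro n
    have h1 : (0:ℝ) < (n:ℝ)+m := by positivity
    have : 1/((n:ℝ)+m+1) ≤ 1/((n:ℝ)+m) := by
      apply one_div_le_one_div_of_le h1; linarith
    linarith
  rw [hasSum_iff_tendsto_nat_of_nonneg hnn]
  have key : ∀ n : ℕ, ∑ i ∈ Finset.range n, (1/((i:ℝ)+m) - 1/((i:ℝ)+m+1))
      = 1/(m:ℝ) - 1/((n:ℝ)+m) := by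
    intro n
    have h := Finset.sum_range_sub' (fun i : ℕ => 1/((i:ℝ)+m)) n
    calc ∑ i ∈ Finset.range n, (1/((i:ℝ)+m) - 1/((i:ℝ)+m+1))
        = ∑ i ∈ Finset.range n, (1/((i:ℝ)+m) - 1/(((i+1:ℕ):ℝ)+m)) := by
          apply Finset.sum_congr rfl; intro i _; push_cast; ring_nf
      _ = 1/(((0:ℕ):ℝ)+m) - 1/((n:ℝ)+m) := h
      _ = 1/(m:ℝ) - 1/((n:ℝ)+m) := by norm_num
  have ht : Filter.Tendsto (fun n : ℕ => 1/((n:ℝ)+m)) atTop (𝓝 0) := by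
    have h0 : Filter.Tendsto (fun n : ℕ => 1/((n:ℝ))) atTop (𝓝 0) := by
      simpa using tendsto_const_div_atTop_nhds_zero_nat (1:ℝ)
    have := (tendsto_add_atTop_iff_nat m).mpr h0
    apply this.congr
    intro n
    push_cast
    ring
  have := (tendsto_const_nhds (x := 1/(m:ℝ))).sub ht
  simp only [sub_zero] at this
  exact Tendsto.congr (fun n => (key n).symm) this

lemma summable_shift (m : ℕ) : Summable (fun n : ℕ => 1/((n:ℝ)+m+1)^2) := by
  have base : Summable (fun u : ℕ => 1/(u:ℝ)^2) :=
    Real.summable_one_div_nat_pow.mpr one_lt_two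
  have := base.comp_injective (add_left_injective (m+1))
  apply this.congr
  intro n
  simp only [Function.comp]
  push_cast
  ring_nf

lemma tail_tsum_le (m : ℕ) (hm : 0 < m) : (∑' n : ℕ, 1/((n:ℝ)+m+1)^2) ≤ 1/(m:ℝ) := by
  have ht := telesc m hm
  have hterm : ∀ n : ℕ, 1/((n:ℝ)+m+1)^2 ≤ 1/((n:ℝ)+m) - 1/((n:ℝ)+m+1) := by
    intro n
    have h1 : (0:ℝ) < (n:ℝ)+m := by positivity
    have h2 : (0:ℝ) < (n:ℝ)+m+1 := by positivity
    have heq : 1/((n:ℝ)+m) - 1/((n:ℝ)+m+1) = 1/(((n:ℝ)+m)*((n:ℝ)+m+1)) := by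
      field_simp
      ring
    rw [heq]
    apply one_div_le_one_div_of_le (by positivity)
    nlinarith
  calc (∑' n : ℕ, 1/((n:ℝ)+m+1)^2)
      ≤ ∑' n : ℕ, (1/((n:ℝ)+m) - 1/((n:ℝ)+m+1)) :=
        Summable.tsum_le_tsum hterm (summable_shift m) ht.summable
    _ = 1/(m:ℝ) := ht.tsum_eq



lemma ite_reindex (T : ℝ) (m : ℕ) (h : ∀ u : ℕ, T < (u:ℝ) → m < u) :
    (∑' u : ℕ, if T < (u:ℝ) then 1/(u:ℝ)^2 else 0) ≤ ∑' n : ℕ, 1/((n:ℝ)+m+1)^2 := by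
  have base : Summable (fun u : ℕ => 1/(u:ℝ)^2) :=
    Real.summable_one_div_nat_pow.mpr one_lt_two
  set s : Set ℕ := {u : ℕ | T < (u:ℝ)} with hs
  have hsupp : Function.support (fun u : ℕ => if T < (u:ℝ) then 1/(u:ℝ)^2 else 0) ⊆ s := by
    intro u hu
    simp only [Function.mem_support] at hu
    by_contra hc
    simp only [hs, Set.mem_setOf_eq] at hc
    rw [if_neg hc] at hu
    exact hu rfl
  rw [← tsum_subtype_eq_of_support_subset hsupp]
  have hsub : (∑' u : s, if T < ((u:ℕ):ℝ) then 1/((u:ℕ):ℝ)^2 else 0)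
      = ∑' u : s, 1/((u:ℕ):ℝ)^2 := by
    apply tsum_congr
    intro u
    exact if_pos (show T < ((u:ℕ):ℝ) from u.2)
  rw [hsub]
  have hsum_s : Summable (fun u : s => 1/((u:ℕ):ℝ)^2) :=
    base.comp_injective Subtype.val_injective
  refine Summable.tsum_le_tsum_of_inj (fun u : s => (u:ℕ) - (m+1)) ?_ (fun c _ => by positivity)
    ?_ hsum_s (summable_shift m)
  · intro u v huv
    have hu := h _ u.2
    have hv := h _ v.2
    have h' : (u:ℕ) - (m+1) = (v:ℕ) - (m+1) := huv
    ext
    omega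
  · intro u
    have hu := h _ u.2
    have : (((u:ℕ) - (m+1) : ℕ):ℝ) + m + 1 = ((u:ℕ):ℝ) := by
      have : ((u:ℕ) - (m+1)) + (m+1) = (u:ℕ) := by omega
      push_cast [Nat.cast_sub (by omega : m+1 ≤ (u:ℕ))]
      ring
    rw [this]

lemma S_le (T : ℝ) (hT : 0 < T) :
    (∑' u : ℕ, if T < (u:ℝ) then 1/(u:ℝ)^2 else 0) ≤ 2 * min (1/T) 1 := by
  rcases le_or_gt T 1 with hT1 | hT1
  · have hmin : min (1/T) 1 = 1 := min_eq_right (by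
      rw [le_div_iff₀ hT]; linarith)
    rw [hmin, mul_one]
    have h0 : ∀ u : ℕ, T < (u:ℝ) → 0 < u := by
      intro u hu
      by_contra hc
      push_neg at hc
      interval_cases u
      simp at hu
      linarith
    calc (∑' u : ℕ, if T < (u:ℝ) then 1/(u:ℝ)^2 else 0)
        ≤ ∑' n : ℕ, 1/((n:ℝ)+(0:ℕ)+1)^2 := ite_reindex T 0 h0
      _ = ∑' n : ℕ, 1/((n:ℝ)+1)^2 := by apply tsum_congr; intro n; norm_num
      _ ≤ 2 := by
          have hs1 : Summable (fun n : ℕ => 1/((n:ℝ)+1)^2) := by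
            have := summable_shift 0
            apply this.congr; intro n; norm_num
          rw [hs1.tsum_eq_zero_add]
          have htail : (∑' n : ℕ, 1/(((n+1:ℕ):ℝ)+1)^2) ≤ 1 := by
            have h1 := tail_tsum_le 1 one_pos
            calc (∑' n : ℕ, 1/(((n+1:ℕ):ℝ)+1)^2)
                = ∑' n : ℕ, 1/((n:ℝ)+((1:ℕ):ℝ)+1)^2 := by
                  apply tsum_congr; intro n; push_cast; ring_nf
              _ ≤ 1/((1:ℕ):ℝ) := h1
              _ = 1 := by norm_num
          have hf0 : (1:ℝ)/((((0:ℕ)):ℝ)+1)^2 = 1 := by norm_num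
          linarith [htail]
  · set m : ℕ := ⌊T⌋₊ with hm
    have hm1 : 1 ≤ m := Nat.le_floor (by exact_mod_cast hT1.le)
    have hmle : (m:ℝ) ≤ T := Nat.floor_le hT.le
    have h0 : ∀ u : ℕ, T < (u:ℝ) → m < u := by
      intro u hu
      exact_mod_cast lt_of_le_of_lt hmle hu
    have hmin : min (1/T) 1 = 1/T := min_eq_left (by
      rw [div_le_one hT]; linarith)
    rw [hmin]
    calc (∑' u : ℕ, if T < (u:ℝ) then 1/(u:ℝ)^2 else 0)
        ≤ ∑' n : ℕ, 1/((n:ℝ)+m+1)^2 := ite_reindex T m h0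
      _ ≤ 1/(m:ℝ) := tail_tsum_le m hm1
      _ ≤ 2 * (1/T) := by
          have hmpos : (0:ℝ) < m := by exact_mod_cast hm1
          rw [mul_one_div, div_le_div_iff₀ hmpos (by positivity)]
          have : T < m + 1 := Nat.lt_floor_add_one T
          have : T ≤ 2 * m := by
            have : (1:ℝ) ≤ m := by exact_mod_cast hm1
            linarith
          linarith [this]


theorem tail_dilate_inner_bound :
    ∃ C > (0 : ℝ), ∀ (s ε J : ℝ) (k l : ℕ),
      1 / 2 < s → 0 < ε → ε < 1 / 2 → 1 ≤ J → 0 < k → 0 < l →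
      (∑' p : {p : ℕ × ℕ // J < ((p.1 : ℕ) : ℝ) ∧ J < ((p.2 : ℕ) : ℝ) ∧ p.2 * k = p.1 * l},
          1 / (((p : ℕ × ℕ).1 : ℝ) * ((p : ℕ × ℕ).2 : ℝ))
        ≤ C * min ((Nat.gcd k l : ℝ) / (((max k l : ℕ) : ℝ) * J))
            ((Nat.gcd k l : ℝ) ^ 2 / ((k : ℝ) * (l : ℝ))))
      ∧ (∑' p : {p : ℕ × ℕ // J < ((p.1 : ℕ) : ℝ) ∧ J < ((p.2 : ℕ) : ℝ) ∧ p.2 * k = p.1 * l},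
          1 / (((p : ℕ × ℕ).1 : ℝ) * ((p : ℕ × ℕ).2 : ℝ))
        ≤ C * J ^ (-ε) * ((Nat.gcd k l : ℝ) ^ 2 / ((k : ℝ) * (l : ℝ))) ^ (1 - ε / 2)) := by
  refine ⟨2, two_pos, ?_⟩
  intro s ε J k l _hs hε hε2 hJ hk hl
  have hJ0 : (0:ℝ) < J := lt_of_lt_of_le one_pos hJ
  have hg : 0 < Nat.gcd k l := Nat.gcd_pos_of_pos_left l hk
  set g := Nat.gcd k l with hgdef
  set k' := k / g with hk'def
  set l' := l / g with hl'def
  have hkk : k' * g = k := Nat.div_mul_cancel (Nat.gcd_dvd_left k l)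
  have hll : l' * g = l := Nat.div_mul_cancel (Nat.gcd_dvd_right k l)
  have hk' : 0 < k' := Nat.div_pos (Nat.le_of_dvd hk (Nat.gcd_dvd_left k l)) hg
  have hl' : 0 < l' := Nat.div_pos (Nat.le_of_dvd hl (Nat.gcd_dvd_right k l)) hg
  have hco : Nat.Coprime k' l' := Nat.coprime_div_gcd_div_gcd hg
  set c := min k' l' with hcdef
  have hc : 0 < c := lt_min hk' hl'
  have hgR : (0:ℝ) < g := by exact_mod_cast hg
  have hk'R : (0:ℝ) < k' := by exact_mod_cast hk'
  have hl'R : (0:ℝ) < l' := by exact_mod_cast hl'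
  have hcR : (0:ℝ) < c := by exact_mod_cast hc
  have hkR : (0:ℝ) < k := by exact_mod_cast hk
  have hlR : (0:ℝ) < l := by exact_mod_cast hl
  have hkEq : (k:ℝ) = (k':ℝ) * g := by exact_mod_cast hkk.symm
  have hlEq : (l:ℝ) = (l':ℝ) * g := by exact_mod_cast hll.symm
  have hcEq : (c:ℝ) = min (k':ℝ) (l':ℝ) := by simp [hcdef, Nat.cast_min]
  have hmaxR : (0:ℝ) < ((max k l : ℕ):ℝ) := by
    have : 0 < max k l := lt_max_of_lt_left hk
    exact_mod_cast this
  set A : ℝ := (g:ℝ) / (((max k l : ℕ):ℝ) * J) with hA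
  set B : ℝ := (g:ℝ)^2 / ((k:ℝ) * (l:ℝ)) with hB
  have hApos : 0 < A := by rw [hA]; positivity
  have hBpos : 0 < B := by rw [hB]; positivity
  -- decomposition of solutions
  have decomp : ∀ p : {p : ℕ × ℕ // J < ((p.1 : ℕ) : ℝ) ∧ J < ((p.2 : ℕ) : ℝ) ∧ p.2 * k = p.1 * l},
      p.val.1 = (p.val.1 / k') * k' ∧ p.val.2 = (p.val.1 / k') * l' := by
    rintro ⟨⟨i, j⟩, hi, hj, hij⟩
    simp only at hi hj hij ⊢
    have h1 : j * (k' * g) = i * (l' * g) := by rw [hkk, hll]; exact hij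
    rw [← mul_assoc, ← mul_assoc] at h1
    have hjk' : j * k' = i * l' := Nat.eq_of_mul_eq_mul_right hg h1
    have hdvd : k' ∣ i := hco.dvd_of_dvd_mul_right ⟨j, by rw [← hjk']; ring⟩
    have hiu : i / k' * k' = i := Nat.div_mul_cancel hdvd
    refine ⟨hiu.symm, ?_⟩
    have h2 : (i / k' * l') * k' = j * k' := by
      calc (i / k' * l') * k' = (i / k' * k') * l' := by ring
        _ = i * l' := by rw [hiu]
        _ = j * k' := hjk'.symm
    exact (Nat.eq_of_mul_eq_mul_right hk' h2).symm
  have upos : ∀ p : {p : ℕ × ℕ // J < ((p.1 : ℕ) : ℝ) ∧ J < ((p.2 : ℕ) : ℝ) ∧ p.2 * k = p.1 * l},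
      0 < p.val.1 / k' := by
    intro p
    have hi := p.2.1
    have hipos : 0 < p.val.1 := by
      rcases Nat.eq_zero_or_pos p.val.1 with h0 | h0
      · exfalso; rw [h0] at hi; norm_num at hi; linarith
      · exact h0
    have h1 := (decomp p).1
    by_contra hcon
    have h0 : p.val.1 / k' = 0 := Nat.le_zero.mp (Nat.not_lt.mp hcon)
    rw [h0] at h1
    simp only [Nat.zero_mul] at h1
    exact absurd h1 (Nat.pos_iff_ne_zero.mp hipos)
  -- the comparison function
  set G : ℕ → ℝ := fun u => (if J/(c:ℝ) < (u:ℝ) then 1/(u:ℝ)^2 else 0) * (1/((k':ℝ)*(l':ℝ)))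
    with hGdef
  have base : Summable (fun u : ℕ => 1/(u:ℝ)^2) :=
    Real.summable_one_div_nat_pow.mpr one_lt_two
  have hGnonneg : ∀ u, 0 ≤ G u := by
    intro u
    rw [hGdef]
    apply mul_nonneg _ (by positivity)
    split_ifs <;> positivity
  have hGsum : Summable G := by
    apply Summable.mul_right
    apply Summable.of_nonneg_of_le (fun u => by split_ifs <;> positivity)
      (fun u => ?_) base
    split_ifs
    · exact le_rfl
    · positivity
  set e : {p : ℕ × ℕ // J < ((p.1 : ℕ) : ℝ) ∧ J < ((p.2 : ℕ) : ℝ) ∧ p.2 * k = p.1 * l} → ℕ :=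
    fun p => p.val.1 / k' with hedef
  have he : Function.Injective e := by
    intro p q hpq
    obtain ⟨hp1, hp2⟩ := decomp p
    obtain ⟨hq1, hq2⟩ := decomp q
    rw [hedef] at hpq
    simp only at hpq
    apply Subtype.ext
    apply Prod.ext
    · rw [hp1, hq1, hpq]
    · rw [hp2, hq2, hpq]
  have hfeqG : ∀ p : {p : ℕ × ℕ // J < ((p.1 : ℕ) : ℝ) ∧ J < ((p.2 : ℕ) : ℝ) ∧ p.2 * k = p.1 * l},
      1 / (((p : ℕ × ℕ).1 : ℝ) * ((p : ℕ × ℕ).2 : ℝ)) = G (e p) := by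
    intro p
    obtain ⟨hp1, hp2⟩ := decomp p
    obtain ⟨hi, hj, -⟩ := p.2
    have hup : 0 < p.val.1 / k' := upos p
    have hupR : (0:ℝ) < (p.val.1 / k' : ℕ) := by exact_mod_cast hup
    have hiR : ((p.val.1 : ℕ):ℝ) = ((p.val.1 / k' : ℕ):ℝ) * (k':ℝ) := by
      conv_lhs => rw [hp1]
      push_cast; ring
    have hjR : ((p.val.2 : ℕ):ℝ) = ((p.val.1 / k' : ℕ):ℝ) * (l':ℝ) := by
      conv_lhs => rw [hp2]
      push_cast; ring
    have hcond : J/(c:ℝ) < ((p.val.1 / k' : ℕ):ℝ) := by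
      rw [div_lt_iff₀ hcR, hcEq, mul_min_of_nonneg _ _ hupR.le]
      refine lt_min ?_ ?_
      · rw [← hiR]; exact hi
      · rw [← hjR]; exact hj
    rw [hGdef]
    simp only
    rw [if_pos (by rw [hedef]; exact hcond)]
    rw [hedef]
    simp only
    rw [hiR, hjR]
    field_simp
  have hfsum : Summable (fun p : {p : ℕ × ℕ // J < ((p.1 : ℕ) : ℝ) ∧ J < ((p.2 : ℕ) : ℝ) ∧ p.2 * k = p.1 * l} =>
      1 / (((p : ℕ × ℕ).1 : ℝ) * ((p : ℕ × ℕ).2 : ℝ))) := by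
    have := hGsum.comp_injective he
    exact this.congr (fun p => (hfeqG p).symm)
  have hTpos : (0:ℝ) < J/(c:ℝ) := by positivity
  have hSle := S_le (J/(c:ℝ)) hTpos
  have hinv : 1/(J/(c:ℝ)) = (c:ℝ)/J := one_div_div _ _
  rw [hinv] at hSle
  have Hmain : (∑' p : {p : ℕ × ℕ // J < ((p.1 : ℕ) : ℝ) ∧ J < ((p.2 : ℕ) : ℝ) ∧ p.2 * k = p.1 * l},
      1 / (((p : ℕ × ℕ).1 : ℝ) * ((p : ℕ × ℕ).2 : ℝ))) ≤ 2 * min A B := by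
    have hAeq : A = ((c:ℝ)/J) * (1/((k':ℝ)*(l':ℝ))) := by
      have hmaxEq : ((max k l : ℕ):ℝ) = max (k':ℝ) (l':ℝ) * (g:ℝ) := by
        rw [(by exact_mod_cast rfl : ((max k l : ℕ):ℝ) = max (k:ℝ) (l:ℝ)), hkEq, hlEq]
        rw [max_mul_of_nonneg _ _ hgR.le]
      have hmm : min (k':ℝ) (l':ℝ) * max (k':ℝ) (l':ℝ) = (k':ℝ)*(l':ℝ) := min_mul_max _ _
      have hminpos' : (0:ℝ) < min (k':ℝ) (l':ℝ) := lt_min hk'R hl'R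
      have hmaxpos' : (0:ℝ) < max (k':ℝ) (l':ℝ) := lt_max_of_lt_left hk'R
      rw [hA, hmaxEq, hcEq]
      field_simp
      linear_combination (-1) * hmm
    have hBeq : B = 1 * (1/((k':ℝ)*(l':ℝ))) := by
      rw [hB, hkEq, hlEq]
      field_simp
    calc (∑' p : {p : ℕ × ℕ // J < ((p.1 : ℕ) : ℝ) ∧ J < ((p.2 : ℕ) : ℝ) ∧ p.2 * k = p.1 * l},
        1 / (((p : ℕ × ℕ).1 : ℝ) * ((p : ℕ × ℕ).2 : ℝ)))
        ≤ ∑' u : ℕ, G u :=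
          Summable.tsum_le_tsum_of_inj e he (fun n _ => hGnonneg n)
            (fun p => le_of_eq (hfeqG p)) hfsum hGsum
      _ = (∑' u : ℕ, if J/(c:ℝ) < (u:ℝ) then 1/(u:ℝ)^2 else 0) * (1/((k':ℝ)*(l':ℝ))) := by
          rw [hGdef]; exact tsum_mul_right
      _ ≤ (2 * min ((c:ℝ)/J) 1) * (1/((k':ℝ)*(l':ℝ))) :=
          mul_le_mul_of_nonneg_right hSle (by positivity)
      _ = 2 * min A B := by
          rw [hAeq, hBeq, ← min_mul_of_nonneg _ _ (by positivity : (0:ℝ) ≤ 1/((k':ℝ)*(l':ℝ)))]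
          ring
  constructor
  · exact Hmain
  · -- interpolation
    have hminpos : 0 < min A B := lt_min hApos hBpos
    have h1 : min A B ≤ A^ε * B^(1-ε) := by
      have e1 : min A B = (min A B)^ε * (min A B)^(1-ε) := by
        rw [← Real.rpow_add hminpos]; norm_num
      rw [e1]
      apply mul_le_mul
      · exact Real.rpow_le_rpow hminpos.le (min_le_left _ _) hε.le
      · exact Real.rpow_le_rpow hminpos.le (min_le_right _ _) (by linarith)
      · positivity
      · positivity
    have h2 : A^ε ≤ J^(-ε) * B^(ε/2) := by
      have hAform : A = ((g:ℝ)/((max k l : ℕ):ℝ)) / J := by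
        rw [hA, div_div]
      have hgm : (0:ℝ) ≤ (g:ℝ)/((max k l : ℕ):ℝ) := by positivity
      rw [hAform, Real.div_rpow hgm hJ0.le, Real.rpow_neg hJ0.le, ← one_div,
        mul_comm, div_eq_mul_one_div]
      apply mul_le_mul_of_nonneg_right _ (by positivity)
      -- (g/max)^ε ≤ B^(ε/2)
      have hx : (0:ℝ) ≤ (g:ℝ)/((max k l : ℕ):ℝ) := hgm
      have e2 : ((g:ℝ)/((max k l : ℕ):ℝ))^ε = (((g:ℝ)/((max k l : ℕ):ℝ))^(2:ℝ))^(ε/2) := by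
        rw [← Real.rpow_mul hx]; congr 1; ring
      rw [e2]
      apply Real.rpow_le_rpow (by positivity) _ (by linarith)
      -- (g/max)^2 ≤ B
      rw [show ((2:ℝ)) = ((2:ℕ):ℝ) by norm_num, Real.rpow_natCast]
      rw [div_pow, hB]
      apply div_le_div_of_nonneg_left (by positivity) (by positivity)
      calc (k:ℝ) * l = min (k:ℝ) l * max (k:ℝ) l := (min_mul_max _ _).symm
        _ ≤ max (k:ℝ) l * max (k:ℝ) l := by
            apply mul_le_mul_of_nonneg_right (min_le_max) (by positivity)
        _ = ((max k l : ℕ):ℝ)^2 := by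
            rw [(by exact_mod_cast rfl : ((max k l : ℕ):ℝ) = max (k:ℝ) (l:ℝ))]; ring
    have h3 : min A B ≤ J^(-ε) * B^(1-ε/2) := by
      calc min A B ≤ A^ε * B^(1-ε) := h1
        _ ≤ (J^(-ε) * B^(ε/2)) * B^(1-ε) := by
            apply mul_le_mul_of_nonneg_right h2 (by positivity)
        _ = J^(-ε) * (B^(ε/2) * B^(1-ε)) := by ring
        _ = J^(-ε) * B^(1-ε/2) := by
            rw [← Real.rpow_add hBpos]
            congr 1
            ring
    calc (∑' p : {p : ℕ × ℕ // J < ((p.1 : ℕ) : ℝ) ∧ J < ((p.2 : ℕ) : ℝ) ∧ p.2 * k = p.1 * l},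
        1 / (((p : ℕ × ℕ).1 : ℝ) * ((p : ℕ × ℕ).2 : ℝ)))
        ≤ 2 * min A B := Hmain
      _ ≤ 2 * (J^(-ε) * B^(1-ε/2)) := by linarith
      _ = 2 * J^(-ε) * B^(1-ε/2) := by ring
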